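/- Fix a weighted configuration with D0 sufficiently small (depending only on d), and vertices u, v. Let B_W be a box in W(u,v) ∪ S(u,v) and let B_H be a box of some hole H. Then every walk in G^+ from B_H to B_W contains a box belonging to the visible boundary of H. -/

import Mathlib

open Filter Set
open scoped ENNReal NNReal Topology

noncomputable section

def torusDist {d : ℕ} (L : ℝ) (x y : Fin d → ℝ) : ℝ :=
  ⨆ k : Fin d, ⨅ m : ℤ, |x k - y k - m * L|

lemma torusDist_symm {d : ℕ} (L : ℝ) (x y : Fin d → ℝ) :
    torusDist L x y = torusDist L y x := by
  unfold torusDist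
  refine iSup_congr fun k => ?_
  rw [← sInf_range, ← sInf_range]
  congr 1
  ext r
  simp only [Set.mem_range]
  constructor
  · rintro ⟨m, rfl⟩
    refine ⟨-m, ?_⟩
    have h : y k - x k - ((-m : ℤ) : ℝ) * L = -(x k - y k - (m : ℤ) * L) := by
      push_cast; ring
    rw [h, abs_neg]
  · rintro ⟨m, rfl⟩
    refine ⟨-m, ?_⟩
    have h : x k - y k - ((-m : ℤ) : ℝ) * L = -(y k - x k - (m : ℤ) * L) := by
      push_cast; ring
    rw [h, abs_neg]

def girgGraph {d : ℕ} (L : ℝ) {V : Type*} (pos : V → Fin d → ℝ) (wt : V → ℝ) :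
    SimpleGraph V where
  Adj u v := u ≠ v ∧ torusDist L (pos u) (pos v) ^ d ≤ wt u * wt v
  symm := ⟨by
    intro u v h
    exact ⟨h.1.symm, by rw [torusDist_symm, mul_comm]; exact h.2⟩⟩
  loopless := ⟨fun u h => h.1 rfl⟩

/-- `wLow d i = 2^{d i / 2}`, the lower end of the weight range of a level-`i` box. -/
def wLow (d i : ℕ) : ℝ := (2 : ℝ) ^ ((d : ℝ) * i / 2)

/-- A box of the tessellation: a level `0 ≤ level ≤ k0` together with the coordinates of
its geometric cell.  Boxes of level `< k0` are the usual boxes and the unique box of level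
`k0` is the top box. -/
@[ext]
structure Box (d k0 : ℕ) where
  level : ℕ
  idx : Fin d → ℕ
  level_le : level ≤ k0
  idx_pos : ∀ k, 1 ≤ idx k
  idx_le : ∀ k, idx k ≤ 2 ^ (k0 - level)

instance (d k0 : ℕ) : Finite (Box d k0) := by
  apply Finite.of_injective (fun B : Box d k0 =>
    ((⟨B.level, Nat.lt_succ_of_le B.level_le⟩ : Fin (k0 + 1)),
      fun k => (⟨B.idx k, Nat.lt_succ_of_le ((B.idx_le k).trans
        (Nat.pow_le_pow_right (by norm_num) (Nat.sub_le k0 B.level)))⟩ : Fin (2 ^ k0 + 1))))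
  intro B1 B2 h
  simp only [Prod.mk.injEq, Fin.mk.injEq, funext_iff] at h
  exact Box.ext h.1 (funext fun k => by simpa using h.2 k)

/-- The region of the augmented space `V_w = T × [1, ∞)` occupied by a box. -/
def boxSet (d k0 : ℕ) (D0 : ℝ) (B : Box d k0) : Set ((Fin d → ℝ) × ℝ) :=
  {p | (∀ k, 2 ^ B.level * ((B.idx k : ℝ) - 1) * D0 ≤ p.1 k ∧
          p.1 k < 2 ^ B.level * (B.idx k : ℝ) * D0) ∧
       wLow d B.level ≤ p.2 ∧ (B.level < k0 → p.2 < wLow d (B.level + 1))}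

/-- Translation of an augmented point by an integer multiple of the torus period in
each geometric coordinate. -/
def torusShift {d : ℕ} (L : ℝ) (v : Fin d → ℤ) (p : (Fin d → ℝ) × ℝ) : (Fin d → ℝ) × ℝ :=
  (fun k => p.1 k + (v k : ℝ) * L, p.2)

/-- The closures of `S1` and `S2` intersect (as subsets of the torus, i.e. up to integer
translations of the geometric coordinates) in a set of Hausdorff dimension at least `δ`. -/
def meetsDim {d : ℕ} (L : ℝ) (δ : ℕ) (S1 S2 : Set ((Fin d → ℝ) × ℝ)) : Prop :=
  ∃ v w : Fin d → ℤ,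
    (δ : ℝ≥0∞) ≤ dimH (torusShift L v '' closure S1 ∩ torusShift L w '' closure S2)

/-- The closures of `S1` and `S2` intersect (as subsets of the torus). -/
def meets {d : ℕ} (L : ℝ) (S1 S2 : Set ((Fin d → ℝ) × ℝ)) : Prop :=
  ∃ v w : Fin d → ℤ,
    (torusShift L v '' closure S1 ∩ torusShift L w '' closure S2).Nonempty

/-- The graph `𝓑` on boxes: two boxes are adjacent iff their closures intersect in a
`d`-dimensional set. -/
def boxGraph (d k0 : ℕ) (D0 L : ℝ) : SimpleGraph (Box d k0) where
  Adj B1 B2 := B1 ≠ B2 ∧ meetsDim L d (boxSet d k0 D0 B1) (boxSet d k0 D0 B2)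
  symm := ⟨by
    rintro B1 B2 ⟨h1, v, w, h⟩
    exact ⟨h1.symm, w, v, by rwa [Set.inter_comm]⟩⟩
  loopless := ⟨fun B h => h.1 rfl⟩

/-- The graph `𝓖⁺` on boxes: two boxes are adjacent iff their closures intersect. -/
def gPlusGraph (d k0 : ℕ) (D0 L : ℝ) : SimpleGraph (Box d k0) where
  Adj B1 B2 := B1 ≠ B2 ∧ meets L (boxSet d k0 D0 B1) (boxSet d k0 D0 B2)
  symm := ⟨by
    rintro B1 B2 ⟨h1, v, w, h⟩
    exact ⟨h1.symm, w, v, by rwa [Set.inter_comm]⟩⟩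
  loopless := ⟨fun B h => h.1 rfl⟩

/-- The parent of a box: the box of the next level directly above it (the unique box of
minimum volume whose geometric projection strictly contains that of the given box).
The top box is its own parent. -/
def parentBox {d k0 : ℕ} (B : Box d k0) : Box d k0 :=
  if h : B.level < k0 then
    { level := B.level + 1
      idx := fun k => (B.idx k + 1) / 2
      level_le := h
      idx_pos := fun k => by
        have := B.idx_pos k
        show 1 ≤ (B.idx k + 1) / 2
        omega
      idx_le := fun k => by
        have h1 := B.idx_le k
        have h2 : k0 - B.level = (k0 - (B.level + 1)) + 1 := by omega
        rw [h2, pow_succ] at h1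
        show (B.idx k + 1) / 2 ≤ 2 ^ (k0 - (B.level + 1))
        omega }
  else B

lemma parentBox_level_le {d k0 : ℕ} (B : Box d k0) : B.level ≤ (parentBox B).level := by
  unfold parentBox
  split <;> simp

/-- The spanning tree `T_𝓑` of `𝓑`, given by the parent edges. -/
def treeGraph (d k0 : ℕ) : SimpleGraph (Box d k0) where
  Adj B1 B2 := B1 ≠ B2 ∧ (parentBox B1 = B2 ∨ parentBox B2 = B1)
  symm := ⟨by
    rintro B1 B2 ⟨h1, h2⟩
    exact ⟨h1.symm, h2.symm⟩⟩
  loopless := ⟨fun B h => h.1 rfl⟩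

/-- The subgraph of `G` induced by a set `R` (kept on the ambient vertex type). -/
def onSet {V : Type*} (G : SimpleGraph V) (R : Set V) : SimpleGraph V where
  Adj a b := a ∈ R ∧ b ∈ R ∧ G.Adj a b
  symm := ⟨fun _ _ h => ⟨h.2.1, h.1, h.2.2.symm⟩⟩
  loopless := ⟨fun a h => G.ne_of_adj h.2.2 rfl⟩

section Generic

variable {α : Type*}

/-- `m`-fold ancestor with respect to a parent function. -/
def ancF (par : α → α) (B : α) (m : ℕ) : α := par^[m] B

/-- Number of steps from `B1` to the lowest common ancestor of `B1` and `B2`. -/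
def lcaStepsF (par : α → α) (B1 B2 : α) : ℕ :=
  sInf {m | ∃ m', ancF par B2 m' = ancF par B1 m}

/-- Number of steps from `B2` to the lowest common ancestor of `B1` and `B2`. -/
def lcaStepsF' (par : α → α) (B1 B2 : α) : ℕ :=
  sInf {m | ancF par B2 m = ancF par B1 (lcaStepsF par B1 B2)}

/-- The canonical path `L(B1, B2)`: the unique path between `B1` and `B2` in the spanning
tree given by the parent edges, i.e. the two upward paths to the lowest common ancestor. -/
def canonPathF (par : α → α) (B1 B2 : α) : Set α :=
  {A | ∃ m ≤ lcaStepsF par B1 B2, ancF par B1 m = A} ∪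
    {A | ∃ m ≤ lcaStepsF' par B1 B2, ancF par B2 m = A}

/-- `L'(B1, B2)`: the canonical path together with everything `G⁺`-adjacent to it. -/
def extPathF (par : α → α) (Gp : SimpleGraph α) (B1 B2 : α) : Set α :=
  canonPathF par B1 B2 ∪ {B | ∃ B' ∈ canonPathF par B1 B2, Gp.Adj B B'}

/-- `W(B1, B2)`: `L'(B1, B2)` together with all connected components of inactive elements
(in `G⁺`) meeting `L'(B1, B2)`. -/
def WsetF (par : α → α) (Gp : SimpleGraph α) (act : α → Prop) (B1 B2 : α) : Set α :=
  extPathF par Gp B1 B2 ∪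
    {B | ¬ act B ∧ ∃ B' ∈ extPathF par Gp B1 B2, ¬ act B' ∧
      (onSet Gp {C | ¬ act C}).Reachable B' B}

/-- `S(B1, B2)`: the elements outside `W(B1, B2)` that are `G⁺`-adjacent to it
(they are automatically active). -/
def SsetF (par : α → α) (Gp : SimpleGraph α) (act : α → Prop) (B1 B2 : α) : Set α :=
  {B | B ∉ WsetF par Gp act B1 B2 ∧ ∃ B' ∈ WsetF par Gp act B1 B2, Gp.Adj B B'}

/-- The boundary of `C` visible from `x`: elements `G⁺`-adjacent to `C` that are connected
to `x` in `𝓑` with `C` removed. -/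
def visBoundaryF (Gb Gp : SimpleGraph α) (C : Set α) (x : α) : Set α :=
  {B' | (∃ B'' ∈ C, Gp.Adj B' B'') ∧ (onSet Gb Cᶜ).Reachable x B'}

end Generic

/-- A box is active if it contains the augmented point of at least one vertex. -/
def isActive (d k0 : ℕ) (D0 : ℝ) {V : Type*} (pos : V → Fin d → ℝ) (wt : V → ℝ)
    (B : Box d k0) : Prop :=
  ∃ u, (pos u, wt u) ∈ boxSet d k0 D0 B

end

/-- `W(B1, B2)` for the box tessellation, with activity determined by the configuration. -/
def boxW (d k0 : ℕ) (D0 L : ℝ) {V : Type*} (pos : V → Fin d → ℝ) (wt : V → ℝ)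
    (B1 B2 : Box d k0) : Set (Box d k0) :=
  WsetF parentBox (gPlusGraph d k0 D0 L) (isActive d k0 D0 pos wt) B1 B2

/-- `S(B1, B2)` for the box tessellation. -/
def boxS (d k0 : ℕ) (D0 L : ℝ) {V : Type*} (pos : V → Fin d → ℝ) (wt : V → ℝ)
    (B1 B2 : Box d k0) : Set (Box d k0) :=
  SsetF parentBox (gPlusGraph d k0 D0 L) (isActive d k0 D0 pos wt) B1 B2

/-- The boundary of `C` visible from `x`, for the box tessellation.  For a hole `H`
(a connected component of `𝓑` minus `W(u,v)`) containing the box `x`, the visible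
boundary of `H` is `boxVisBoundary … (W(u,v)) x`. -/
def boxVisBoundary (d k0 : ℕ) (D0 L : ℝ) (C : Set (Box d k0)) (x : Box d k0) :
    Set (Box d k0) :=
  visBoundaryF (boxGraph d k0 D0 L) (gPlusGraph d k0 D0 L) C x

/-! ### Auxiliary development for statement_8 -/

namespace Statement8

open SimpleGraph

variable {d k0 : ℕ} {D0 L : ℝ}

lemma wLow_lt_wLow (hd : 1 ≤ d) {i j : ℕ} (h : i < j) : wLow d i < wLow d j := by
  unfold wLow
  rw [Real.rpow_lt_rpow_left_iff (by norm_num)]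
  have hd' : (0:ℝ) < d := by exact_mod_cast hd
  have hij : (i:ℝ) < (j:ℝ) := by exact_mod_cast h
  nlinarith

lemma wLow_le_wLow (hd : 1 ≤ d) {i j : ℕ} (h : i ≤ j) : wLow d i ≤ wLow d j := by
  rcases eq_or_lt_of_le h with rfl | h
  · exact le_refl _
  · exact (wLow_lt_wLow hd h).le

/-- The closed box: closure of `boxSet`. -/
def clBox (d k0 : ℕ) (D0 : ℝ) (B : Box d k0) : Set ((Fin d → ℝ) × ℝ) :=
  {p | (∀ k, 2 ^ B.level * ((B.idx k : ℝ) - 1) * D0 ≤ p.1 k ∧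
          p.1 k ≤ 2 ^ B.level * (B.idx k : ℝ) * D0) ∧
       wLow d B.level ≤ p.2 ∧ (B.level < k0 → p.2 ≤ wLow d (B.level + 1))}

lemma closure_boxSet (hd : 1 ≤ d) (hD0 : 0 < D0) (B : Box d k0) :
    closure (boxSet d k0 D0 B) = clBox d k0 D0 B := by
  have hside : ∀ k : Fin d, 2 ^ B.level * ((B.idx k : ℝ) - 1) * D0 ≠
      2 ^ B.level * (B.idx k : ℝ) * D0 := by
    intro k
    have h2 : (0:ℝ) < 2 ^ B.level * D0 := by positivity
    nlinarith
  by_cases hlvl : B.level < k0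
  · have h1 : boxSet d k0 D0 B =
        (Set.univ.pi fun k => Set.Ico (2 ^ B.level * ((B.idx k : ℝ) - 1) * D0)
           (2 ^ B.level * (B.idx k : ℝ) * D0)) ×ˢ
          Set.Ico (wLow d B.level) (wLow d (B.level + 1)) := by
      ext p
      simp only [boxSet, Set.mem_setOf_eq, Set.mem_prod, Set.mem_pi, Set.mem_univ,
        forall_true_left, Set.mem_Ico]
      constructor
      · rintro ⟨h1, h2, h3⟩; exact ⟨h1, h2, h3 hlvl⟩
      · rintro ⟨h1, h2, h3⟩; exact ⟨h1, h2, fun _ => h3⟩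
    rw [h1, closure_prod_eq, closure_pi_set]
    have h2 : ∀ k : Fin d, closure (Set.Ico (2 ^ B.level * ((B.idx k : ℝ) - 1) * D0)
        (2 ^ B.level * (B.idx k : ℝ) * D0)) = Set.Icc (2 ^ B.level * ((B.idx k : ℝ) - 1) * D0)
        (2 ^ B.level * (B.idx k : ℝ) * D0) := fun k => closure_Ico (hside k)
    have h3 : closure (Set.Ico (wLow d B.level) (wLow d (B.level + 1))) =
        Set.Icc (wLow d B.level) (wLow d (B.level + 1)) :=
      closure_Ico (wLow_lt_wLow hd (Nat.lt_succ_self _)).ne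
    ext p
    simp only [Set.mem_prod, Set.mem_pi, Set.mem_univ, forall_true_left, h2, h3,
      Function.comp, clBox, Set.mem_setOf_eq, Set.mem_Icc]
    constructor
    · rintro ⟨h1, h2, h3⟩; exact ⟨h1, h2, fun _ => h3⟩
    · rintro ⟨h1, h2, h3⟩; exact ⟨h1, h2, h3 hlvl⟩
  · have h1 : boxSet d k0 D0 B =
        (Set.univ.pi fun k => Set.Ico (2 ^ B.level * ((B.idx k : ℝ) - 1) * D0)
           (2 ^ B.level * (B.idx k : ℝ) * D0)) ×ˢ Set.Ici (wLow d B.level) := by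
      ext p
      simp only [boxSet, Set.mem_setOf_eq, Set.mem_prod, Set.mem_pi, Set.mem_univ,
        forall_true_left, Set.mem_Ico, Set.mem_Ici]
      constructor
      · rintro ⟨h1, h2, _⟩; exact ⟨h1, h2⟩
      · rintro ⟨h1, h2⟩; exact ⟨h1, h2, fun h => absurd h hlvl⟩
    rw [h1, closure_prod_eq, closure_pi_set]
    have h2 : ∀ k : Fin d, closure (Set.Ico (2 ^ B.level * ((B.idx k : ℝ) - 1) * D0)
        (2 ^ B.level * (B.idx k : ℝ) * D0)) = Set.Icc (2 ^ B.level * ((B.idx k : ℝ) - 1) * D0)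
        (2 ^ B.level * (B.idx k : ℝ) * D0) := fun k => closure_Ico (hside k)
    ext p
    simp only [Set.mem_prod, Set.mem_pi, Set.mem_univ, forall_true_left, h2, closure_Ici,
      Function.comp, clBox, Set.mem_setOf_eq, Set.mem_Icc, Set.mem_Ici]
    constructor
    · rintro ⟨h1, h2⟩; exact ⟨h1, h2, fun h => absurd h hlvl⟩
    · rintro ⟨h1, h2, _⟩; exact ⟨h1, h2⟩

lemma mem_torusShift_image {v : Fin d → ℤ} {S : Set ((Fin d → ℝ) × ℝ)}
    {p : (Fin d → ℝ) × ℝ} :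
    p ∈ torusShift L v '' S ↔ ((fun k => p.1 k - v k * L, p.2) : (Fin d → ℝ) × ℝ) ∈ S := by
  constructor
  · rintro ⟨q, hq, rfl⟩
    have h1 : (fun k => (torusShift L v q).1 k - v k * L) = q.1 := by
      funext k; simp [torusShift]
    have h2 : (torusShift L v q).2 = q.2 := rfl
    rw [h1, h2]
    exact hq
  · intro h
    refine ⟨_, h, ?_⟩
    simp only [torusShift]
    ext k
    · simp
    · rfl

/-- The closed cube at level `i` with integer coordinates `J` (universal cover). -/
def clCube (d k0 : ℕ) (D0 : ℝ) (i : ℕ) (J : Fin d → ℤ) : Set ((Fin d → ℝ) × ℝ) :=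
  {p | (∀ k, 2 ^ i * ((J k : ℝ) - 1) * D0 ≤ p.1 k ∧ p.1 k ≤ 2 ^ i * (J k : ℝ) * D0) ∧
       wLow d i ≤ p.2 ∧ (i < k0 → p.2 ≤ wLow d (i + 1))}

lemma torusShift_clBox (hL : L = D0 * 2 ^ k0) (B : Box d k0) (v : Fin d → ℤ) :
    torusShift L v '' clBox d k0 D0 B =
      clCube d k0 D0 B.level (fun k => (B.idx k : ℤ) + v k * 2 ^ (k0 - B.level)) := by
  have hLL : L = 2 ^ B.level * 2 ^ (k0 - B.level) * D0 := by
    rw [hL, ← pow_add, Nat.add_sub_cancel' B.level_le]; ring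
  ext p
  rw [mem_torusShift_image]
  simp only [clBox, clCube, Set.mem_setOf_eq]
  refine and_congr (forall_congr' fun k => ?_) Iff.rfl
  push_cast
  rw [hLL]
  constructor
  · rintro ⟨ha, hb⟩
    constructor <;> nlinarith [ha, hb]
  · rintro ⟨ha, hb⟩
    constructor <;> nlinarith [ha, hb]

/-- The box at level `i` whose (torus-wrapped) cube has integer coordinates `J`. -/
def mkBox (d k0 : ℕ) (i : ℕ) (hi : i ≤ k0) (J : Fin d → ℤ) : Box d k0 where
  level := i
  idx := fun k => ((J k - 1) % (2 ^ (k0 - i) : ℤ)).toNat + 1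
  level_le := hi
  idx_pos := fun k => Nat.le_add_left 1 _
  idx_le := fun k => by
    have h0 : (0:ℤ) < 2 ^ (k0 - i) := by positivity
    have h1 := Int.emod_lt_of_pos (J k - 1) h0
    have h2 := Int.emod_nonneg (J k - 1) h0.ne'
    have h3 : ((2 ^ (k0 - i) : ℕ) : ℤ) = 2 ^ (k0 - i) := by push_cast; ring
    show ((J k - 1) % (2 ^ (k0 - i) : ℤ)).toNat + 1 ≤ 2 ^ (k0 - i)
    omega

lemma mkBox_level (i : ℕ) (hi : i ≤ k0) (J : Fin d → ℤ) :
    (mkBox d k0 i hi J).level = i := rfl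

lemma mkBox_congr {i i' : ℕ} (h : i = i') (hi : i ≤ k0) (hi' : i' ≤ k0) (J : Fin d → ℤ) :
    mkBox d k0 i hi J = mkBox d k0 i' hi' J := by subst h; rfl

lemma mkBox_idx_add (i : ℕ) (hi : i ≤ k0) (J : Fin d → ℤ) (k : Fin d) :
    ((mkBox d k0 i hi J).idx k : ℤ) + ((J k - 1) / 2 ^ (k0 - i)) * 2 ^ (k0 - i) = J k := by
  have h0 : (0:ℤ) < 2 ^ (k0 - i) := by positivity
  have h2 := Int.emod_nonneg (J k - 1) h0.ne'
  have h4 : (((J k - 1) % 2 ^ (k0 - i)).toNat : ℤ) = (J k - 1) % 2 ^ (k0 - i) :=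
    Int.toNat_of_nonneg h2
  show ((((J k - 1) % (2 ^ (k0 - i) : ℤ)).toNat + 1 : ℕ) : ℤ) + _ = J k
  push_cast
  rw [h4]
  linarith [Int.emod_add_mul_ediv (J k - 1) ((2:ℤ) ^ (k0 - i))]

lemma mkBox_eq_self (B : Box d k0) (v : Fin d → ℤ) :
    mkBox d k0 B.level B.level_le (fun k => (B.idx k : ℤ) + v k * 2 ^ (k0 - B.level)) = B := by
  refine Box.ext rfl (funext fun k => ?_)
  show (((B.idx k : ℤ) + v k * 2 ^ (k0 - B.level) - 1) % (2 ^ (k0 - B.level) : ℤ)).toNat + 1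
      = B.idx k
  have h0 : (0:ℤ) < 2 ^ (k0 - B.level) := by positivity
  have h5 : ((B.idx k : ℤ) + v k * 2 ^ (k0 - B.level) - 1) % (2 ^ (k0 - B.level) : ℤ)
      = ((B.idx k : ℤ) - 1 + v k * 2 ^ (k0 - B.level)) % (2 ^ (k0 - B.level) : ℤ) := by
    ring_nf
  rw [h5, Int.add_mul_emod_self_right]
  have h6 : ((B.idx k : ℤ) - 1) % (2 ^ (k0 - B.level) : ℤ) = (B.idx k : ℤ) - 1 := by
    apply Int.emod_eq_of_lt
    · have := B.idx_pos k; omega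
    · have := B.idx_le k
      have h3 : ((2 ^ (k0 - B.level) : ℕ) : ℤ) = 2 ^ (k0 - B.level) := by push_cast; ring
      omega
  rw [h6]
  omega

lemma shift_closure_box (hd : 1 ≤ d) (hD0 : 0 < D0) (hL : L = D0 * 2 ^ k0)
    (B : Box d k0) (v : Fin d → ℤ) :
    torusShift L v '' closure (boxSet d k0 D0 B) =
      clCube d k0 D0 B.level (fun k => (B.idx k : ℤ) + v k * 2 ^ (k0 - B.level)) := by
  rw [closure_boxSet hd hD0, torusShift_clBox hL]

lemma shift_closure_mkBox (hd : 1 ≤ d) (hD0 : 0 < D0) (hL : L = D0 * 2 ^ k0)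
    (i : ℕ) (hi : i ≤ k0) (J : Fin d → ℤ) :
    torusShift L (fun k => (J k - 1) / 2 ^ (k0 - i)) '' closure (boxSet d k0 D0 (mkBox d k0 i hi J))
      = clCube d k0 D0 i J := by
  rw [shift_closure_box hd hD0 hL]
  have : (fun k => ((mkBox d k0 i hi J).idx k : ℤ)
      + (J k - 1) / 2 ^ (k0 - (mkBox d k0 i hi J).level) * 2 ^ (k0 - (mkBox d k0 i hi J).level))
      = J := funext fun k => mkBox_idx_add i hi J k
  rw [mkBox_level] at this ⊢
  rw [this]

/-- `p` lies in the closure of the box `C`, up to torus shifts. -/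
def inCl (d k0 : ℕ) (D0 L : ℝ) (p : (Fin d → ℝ) × ℝ) (C : Box d k0) : Prop :=
  ∃ v : Fin d → ℤ, p ∈ torusShift L v '' closure (boxSet d k0 D0 C)

lemma meets_of_inCl {p : (Fin d → ℝ) × ℝ} {C1 C2 : Box d k0}
    (h1 : inCl d k0 D0 L p C1) (h2 : inCl d k0 D0 L p C2) :
    meets L (boxSet d k0 D0 C1) (boxSet d k0 D0 C2) := by
  obtain ⟨v, hv⟩ := h1
  obtain ⟨w, hw⟩ := h2
  exact ⟨v, w, p, hv, hw⟩

lemma inCl_elim (hd : 1 ≤ d) (hD0 : 0 < D0) (hL : L = D0 * 2 ^ k0)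
    {p : (Fin d → ℝ) × ℝ} {C : Box d k0} (h : inCl d k0 D0 L p C) :
    ∃ J : Fin d → ℤ, mkBox d k0 C.level C.level_le J = C ∧ p ∈ clCube d k0 D0 C.level J := by
  obtain ⟨v, hv⟩ := h
  rw [shift_closure_box hd hD0 hL] at hv
  exact ⟨fun k => (C.idx k : ℤ) + v k * 2 ^ (k0 - C.level), mkBox_eq_self C v, hv⟩

lemma inCl_intro (hd : 1 ≤ d) (hD0 : 0 < D0) (hL : L = D0 * 2 ^ k0)
    {p : (Fin d → ℝ) × ℝ} {i : ℕ} (hi : i ≤ k0) {J : Fin d → ℤ}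
    (h : p ∈ clCube d k0 D0 i J) : inCl d k0 D0 L p (mkBox d k0 i hi J) :=
  ⟨fun k => (J k - 1) / 2 ^ (k0 - i), by rw [shift_closure_mkBox hd hD0 hL]; exact h⟩

end Statement8
namespace Statement8

variable {d k0 : ℕ} {D0 L : ℝ}

lemma dim_pi_Icc (hd : 1 ≤ d) (a b : Fin d → ℝ) (h : ∀ k, a k < b k) :
    dimH (Set.univ.pi fun k => Set.Icc (a k) (b k)) = d := by
  have hne : (interior (Set.univ.pi fun k => Set.Icc (a k) (b k))).Nonempty := by
    have hopen : IsOpen (Set.univ.pi fun k => Set.Ioo (a k) (b k)) :=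
      isOpen_set_pi Set.finite_univ (fun k _ => isOpen_Ioo)
    refine ⟨fun k => (a k + b k) / 2,
      (hopen.subset_interior_iff.2 (Set.pi_mono fun k _ => Set.Ioo_subset_Icc_self)) ?_⟩
    intro k _
    constructor <;> [skip; skip] <;> have := h k <;> simp only [Set.mem_Ioo] <;> linarith
  rw [Real.dimH_of_nonempty_interior hne, Module.finrank_fin_fun]

lemma isometry_snd_embed (c : ℝ) :
    Isometry (fun y : Fin d → ℝ => ((y, c) : (Fin d → ℝ) × ℝ)) := by
  apply Isometry.of_dist_eq
  intro x y
  rw [Prod.dist_eq]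
  simp only [dist_self]
  exact sup_eq_left.2 dist_nonneg

lemma isometry_face_embed (k' : Fin d) (t : ℝ) :
    Isometry (fun y : Fin d → ℝ =>
      (((fun k => if k = k' then t else y k), y k') : (Fin d → ℝ) × ℝ)) := by
  apply Isometry.of_dist_eq
  intro x y
  apply le_antisymm
  · rw [Prod.dist_eq]
    apply max_le
    · rw [dist_pi_le_iff dist_nonneg]
      intro k
      by_cases hk : k = k'
      · simp [hk, dist_nonneg]
      · simp only [hk, if_false]
        exact dist_le_pi_dist x y k
    · exact dist_le_pi_dist x y k'
  · rw [dist_pi_le_iff dist_nonneg]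
    intro k
    by_cases hk : k = k'
    · subst hk
      rw [Prod.dist_eq]
      exact le_max_right _ _
    · rw [Prod.dist_eq]
      refine le_trans ?_ (le_max_left _ _)
      have h2 := dist_le_pi_dist (fun j => if j = k' then t else x j)
        (fun j => if j = k' then t else y j) k
      simpa [hk] using h2

lemma dim_face_ge (hd : 1 ≤ d) (k' : Fin d) (t : ℝ) (a b : Fin d → ℝ) (wl wh : ℝ)
    (hab : ∀ k, a k < b k) (hw : wl < wh) {S : Set ((Fin d → ℝ) × ℝ)}
    (hS : ∀ y : Fin d → ℝ, (∀ k, k ≠ k' → y k ∈ Set.Icc (a k) (b k)) → y k' ∈ Set.Icc wl wh →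
      (((fun k => if k = k' then t else y k), y k') : (Fin d → ℝ) × ℝ) ∈ S) :
    (d : ℝ≥0∞) ≤ dimH S := by
  set a' : Fin d → ℝ := fun k => if k = k' then wl else a k with ha'
  set b' : Fin d → ℝ := fun k => if k = k' then wh else b k with hb'
  have hab' : ∀ k, a' k < b' k := by
    intro k; by_cases hk : k = k' <;> simp [ha', hb', hk, hab k, hw]
  have himg : (fun y : Fin d → ℝ =>
        (((fun k => if k = k' then t else y k), y k') : (Fin d → ℝ) × ℝ)) ''
        (Set.univ.pi fun k => Set.Icc (a' k) (b' k)) ⊆ S := by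
    rintro _ ⟨y, hy, rfl⟩
    refine hS y (fun k hk => ?_) ?_
    · have := hy k (Set.mem_univ k)
      simpa [ha', hb', hk] using this
    · have := hy k' (Set.mem_univ k')
      simpa [ha', hb'] using this
  calc (d : ℝ≥0∞) = dimH (Set.univ.pi fun k => Set.Icc (a' k) (b' k)) :=
        (dim_pi_Icc hd a' b' hab').symm
    _ = dimH ((fun y : Fin d → ℝ =>
        (((fun k => if k = k' then t else y k), y k') : (Fin d → ℝ) × ℝ)) ''
        (Set.univ.pi fun k => Set.Icc (a' k) (b' k))) :=
        ((isometry_face_embed k' t).dimH_image _).symm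
    _ ≤ dimH S := dimH_mono himg

lemma dim_slab_ge (hd : 1 ≤ d) (c : ℝ) (a b : Fin d → ℝ) (hab : ∀ k, a k < b k)
    {S : Set ((Fin d → ℝ) × ℝ)}
    (hS : ∀ y : Fin d → ℝ, (∀ k, y k ∈ Set.Icc (a k) (b k)) → ((y, c) : (Fin d → ℝ) × ℝ) ∈ S) :
    (d : ℝ≥0∞) ≤ dimH S := by
  have himg : (fun y : Fin d → ℝ => ((y, c) : (Fin d → ℝ) × ℝ)) ''
      (Set.univ.pi fun k => Set.Icc (a k) (b k)) ⊆ S := by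
    rintro _ ⟨y, hy, rfl⟩
    exact hS y (fun k => hy k (Set.mem_univ k))
  calc (d : ℝ≥0∞) = dimH (Set.univ.pi fun k => Set.Icc (a k) (b k)) :=
        (dim_pi_Icc hd a b hab).symm
    _ = dimH ((fun y : Fin d → ℝ => ((y, c) : (Fin d → ℝ) × ℝ)) ''
        (Set.univ.pi fun k => Set.Icc (a k) (b k))) := ((isometry_snd_embed c).dimH_image _).symm
    _ ≤ dimH S := dimH_mono himg

end Statement8
namespace Statement8

variable {d k0 : ℕ} {D0 L : ℝ}

lemma level_k0_eq (B1 B2 : Box d k0) (h1 : B1.level = k0) (h2 : B2.level = k0) : B1 = B2 := by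
  refine Box.ext (h1.trans h2.symm) (funext fun k => ?_)
  have a1 := B1.idx_le k
  have a2 := B2.idx_le k
  have b1 := B1.idx_pos k
  have b2 := B2.idx_pos k
  rw [h1, Nat.sub_self, pow_zero] at a1
  rw [h2, Nat.sub_self, pow_zero] at a2
  omega

lemma adj_same_level (hd : 1 ≤ d) (hD0 : 0 < D0) (hL : L = D0 * 2 ^ k0)
    {i : ℕ} (hi : i ≤ k0) (J J' : Fin d → ℤ) (k' : Fin d)
    (hJJ : ∀ k, k ≠ k' → J k = J' k) (hk' : J' k' = J k' + 1) :
    mkBox d k0 i hi J = mkBox d k0 i hi J' ∨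
      (boxGraph d k0 D0 L).Adj (mkBox d k0 i hi J) (mkBox d k0 i hi J') := by
  by_cases heq : mkBox d k0 i hi J = mkBox d k0 i hi J'
  · exact Or.inl heq
  right
  have hik0 : i < k0 := by
    rcases lt_or_eq_of_le hi with h | h
    · exact h
    · subst h
      exact absurd (level_k0_eq _ _ rfl rfl) heq
  have hpos : (0:ℝ) < 2 ^ i * D0 := by positivity
  show _ ≠ _ ∧ meetsDim L d _ _
  refine ⟨heq, fun k => (J k - 1) / 2 ^ (k0 - i), fun k => (J' k - 1) / 2 ^ (k0 - i), ?_⟩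
  rw [shift_closure_mkBox hd hD0 hL, shift_closure_mkBox hd hD0 hL]
  apply dim_face_ge hd k' (2 ^ i * (J k' : ℝ) * D0)
    (fun k => 2 ^ i * ((J k : ℝ) - 1) * D0) (fun k => 2 ^ i * (J k : ℝ) * D0)
    (wLow d i) (wLow d (i + 1))
  · intro k
    show 2 ^ i * ((J k : ℝ) - 1) * D0 < 2 ^ i * (J k : ℝ) * D0
    nlinarith
  · exact wLow_lt_wLow hd (Nat.lt_succ_self i)
  · intro y hy hw'
    have hcast : (J' k' : ℝ) = (J k' : ℝ) + 1 := by exact_mod_cast congrArg Int.cast hk'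
    constructor
    · refine ⟨fun k => ?_, hw'.1, fun _ => hw'.2⟩
      by_cases hk : k = k'
      · subst hk
        simp only [eq_self_iff_true, if_true]
        constructor <;> nlinarith
      · simp only [if_neg hk]
        exact hy k hk
    · refine ⟨fun k => ?_, hw'.1, fun _ => hw'.2⟩
      by_cases hk : k = k'
      · subst hk
        simp only [eq_self_iff_true, if_true, hcast]
        constructor <;> nlinarith
      · simp only [if_neg hk]
        rw [← hJJ k hk]
        exact hy k hk

lemma cube_subset_parent (hD0 : 0 < D0) {i : ℕ} (J : Fin d → ℤ) (k : Fin d) (x : ℝ)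
    (h1 : 2 ^ i * ((J k : ℝ) - 1) * D0 ≤ x) (h2 : x ≤ 2 ^ i * (J k : ℝ) * D0) :
    2 ^ (i+1) * ((((J k + 1) / 2 : ℤ) : ℝ) - 1) * D0 ≤ x ∧
      x ≤ 2 ^ (i+1) * (((J k + 1) / 2 : ℤ) : ℝ) * D0 := by
  have hq1 : 2 * ((J k + 1) / 2) - 2 ≤ J k - 1 := by omega
  have hq2 : J k ≤ 2 * ((J k + 1) / 2) := by omega
  have hq1' : 2 * ((((J k + 1) / 2 : ℤ)) : ℝ) - 2 ≤ (J k : ℝ) - 1 := by exact_mod_cast hq1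
  have hq2' : (J k : ℝ) ≤ 2 * ((((J k + 1) / 2 : ℤ)) : ℝ) := by exact_mod_cast hq2
  have hpow : (2:ℝ) ^ (i+1) = 2 * 2 ^ i := by ring
  have hpos : (0:ℝ) < 2 ^ i * D0 := by positivity
  rw [hpow]
  constructor <;> nlinarith

lemma adj_parent (hd : 1 ≤ d) (hD0 : 0 < D0) (hL : L = D0 * 2 ^ k0)
    {i : ℕ} (hik : i < k0) (J : Fin d → ℤ) :
    (boxGraph d k0 D0 L).Adj (mkBox d k0 i (le_of_lt hik) J)
      (mkBox d k0 (i+1) hik (fun k => (J k + 1) / 2)) := by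
  have hne : mkBox d k0 i (le_of_lt hik) J ≠ mkBox d k0 (i+1) hik (fun k => (J k + 1) / 2) := by
    intro h
    have := congrArg Box.level h
    simp only [mkBox_level] at this
    omega
  show _ ≠ _ ∧ meetsDim L d _ _
  refine ⟨hne, fun k => (J k - 1) / 2 ^ (k0 - i),
    fun k => ((J k + 1) / 2 - 1) / 2 ^ (k0 - (i+1)), ?_⟩
  rw [shift_closure_mkBox hd hD0 hL, shift_closure_mkBox hd hD0 hL]
  apply dim_slab_ge hd (wLow d (i+1))
    (fun k => 2 ^ i * ((J k : ℝ) - 1) * D0) (fun k => 2 ^ i * (J k : ℝ) * D0)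
  · intro k
    have hpos : (0:ℝ) < 2 ^ i * D0 := by positivity
    show 2 ^ i * ((J k : ℝ) - 1) * D0 < 2 ^ i * (J k : ℝ) * D0
    nlinarith
  · intro y hy
    constructor
    · exact ⟨fun k => hy k, (wLow_lt_wLow hd (Nat.lt_succ_self i)).le, fun _ => le_refl _⟩
    · refine ⟨fun k => cube_subset_parent hD0 J k (y k) (hy k).1 (hy k).2, le_refl _,
        fun _ => wLow_le_wLow hd (Nat.le_succ _)⟩

lemma mem_parent_cube (hD0 : 0 < D0) {i : ℕ} (hik : i < k0) {J : Fin d → ℤ}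
    {p : (Fin d → ℝ) × ℝ} (hp : p ∈ clCube d k0 D0 i J) (hp2 : p.2 = wLow d (i+1))
    (hd : 1 ≤ d) :
    p ∈ clCube d k0 D0 (i+1) (fun k => (J k + 1) / 2) := by
  obtain ⟨hc, _, _⟩ := hp
  refine ⟨fun k => cube_subset_parent hD0 J k (p.1 k) (hc k).1 (hc k).2, le_of_eq hp2.symm,
    fun _ => ?_⟩
  rw [hp2]
  exact wLow_le_wLow hd (Nat.le_succ _)

end Statement8
namespace Statement8

variable {d k0 : ℕ} {D0 L : ℝ}

lemma cube_coord_near (hD0 : 0 < D0) {i : ℕ} {J1 J2 : Fin d → ℤ} {p : (Fin d → ℝ) × ℝ}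
    (h1 : p ∈ clCube d k0 D0 i J1) (h2 : p ∈ clCube d k0 D0 i J2) (k : Fin d) :
    J1 k - 1 ≤ J2 k ∧ J2 k - 1 ≤ J1 k := by
  have a1 := (h1.1 k).1
  have b1 := (h1.1 k).2
  have a2 := (h2.1 k).1
  have b2 := (h2.1 k).2
  have hpos : (0:ℝ) < 2 ^ i * D0 := by positivity
  constructor
  · have hr : ((J1 k : ℝ)) - 1 ≤ (J2 k : ℝ) := by nlinarith
    exact_mod_cast hr
  · have hr : ((J2 k : ℝ)) - 1 ≤ (J1 k : ℝ) := by nlinarith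
    exact_mod_cast hr

lemma chain_same_level (hd : 1 ≤ d) (hD0 : 0 < D0) (hL : L = D0 * 2 ^ k0)
    {i : ℕ} (hi : i ≤ k0) {p : (Fin d → ℝ) × ℝ} (J1 J2 : Fin d → ℤ)
    (h1 : p ∈ clCube d k0 D0 i J1) (h2 : p ∈ clCube d k0 D0 i J2) :
    ∃ l : List (Box d k0),
      List.Chain' (fun A B => A = B ∨ (boxGraph d k0 D0 L).Adj A B)
        (mkBox d k0 i hi J1 :: (l ++ [mkBox d k0 i hi J2])) ∧
      ∀ C ∈ l, inCl d k0 D0 L p C := by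
  set K : ℕ → Fin d → ℤ := fun m k => if (k : ℕ) < m then J2 k else J1 k with hK
  have hK0 : K 0 = J1 := by funext k; simp [hK]
  have hKd : K d = J2 := by funext k; simp [hK, k.isLt]
  have hKmem : ∀ m, p ∈ clCube d k0 D0 i (K m) := by
    intro m
    refine ⟨fun k => ?_, h1.2.1, h1.2.2⟩
    by_cases hk : (k:ℕ) < m
    · simpa [hK, hk] using h2.1 k
    · simpa [hK, hk] using h1.1 k
  have main : ∀ m : ℕ, ∃ l : List (Box d k0),
      List.Chain' (fun A B => A = B ∨ (boxGraph d k0 D0 L).Adj A B)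
        (mkBox d k0 i hi J1 :: (l ++ [mkBox d k0 i hi (K m)])) ∧
      ∀ C ∈ l, inCl d k0 D0 L p C := by
    intro m
    induction m with
    | zero =>
      refine ⟨[], ?_, by simp⟩
      rw [hK0]
      exact List.isChain_pair.2 (Or.inl rfl)
    | succ m ih =>
      obtain ⟨l, hc, hin⟩ := ih
      by_cases hmd : m < d
      · set km : Fin d := ⟨m, hmd⟩ with hkm
        have hKm_km : K m km = J1 km := by simp [hK, hkm]
        have hKm1_km : K (m+1) km = J2 km := by simp [hK, hkm]
        by_cases hJeq : J1 km = J2 km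
        · have hKeq : K (m+1) = K m := by
            funext k
            simp only [hK]
            by_cases hk : (k:ℕ) < m
            · simp [hk, Nat.lt_succ_of_lt hk]
            · by_cases hk2 : (k:ℕ) < m + 1
              · have hkm' : (k:ℕ) = m := by omega
                have hkk : k = km := Fin.ext hkm'
                rw [if_pos hk2, if_neg hk, hkk, hJeq]
              · simp [hk, hk2]
          exact ⟨l, by rw [hKeq]; exact hc, hin⟩
        · have hnear := cube_coord_near hD0 (hKmem 0) (hKmem 0) km
          have hnear' := cube_coord_near hD0 h1 h2 km
          have hdiffs : ∀ k, k ≠ km → K m k = K (m+1) k := by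
            intro k hk
            have hne : (k:ℕ) ≠ m := fun h => hk (Fin.ext h)
            simp only [hK]
            by_cases hlt : (k:ℕ) < m
            · have hlt2 : (k:ℕ) < m + 1 := by omega
              simp [hlt, hlt2]
            · have hlt2 : ¬ (k:ℕ) < m + 1 := by omega
              simp [hlt, hlt2]
          have hstep : mkBox d k0 i hi (K m) = mkBox d k0 i hi (K (m+1)) ∨
              (boxGraph d k0 D0 L).Adj (mkBox d k0 i hi (K m)) (mkBox d k0 i hi (K (m+1))) := by
            rcases (by omega : J2 km = J1 km + 1 ∨ J1 km = J2 km + 1) with hcase | hcase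
            · exact adj_same_level hd hD0 hL hi (K m) (K (m+1)) km
                (fun k hk => hdiffs k hk) (by rw [hKm1_km, hKm_km, hcase])
            · rcases adj_same_level hd hD0 hL hi (K (m+1)) (K m) km
                (fun k hk => (hdiffs k hk).symm) (by rw [hKm1_km, hKm_km, hcase]) with h | h
              · exact Or.inl h.symm
              · exact Or.inr h.symm
          refine ⟨l ++ [mkBox d k0 i hi (K m)], ?_, ?_⟩
          · have happ := List.IsChain.append hc (List.isChain_singleton
              (mkBox d k0 i hi (K (m+1)))) ?_
            · simpa [List.append_assoc, List.Chain'] using happ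
            · intro x hx y hy
              rw [show (mkBox d k0 i hi J1 :: (l ++ [mkBox d k0 i hi (K m)]))
                  = (mkBox d k0 i hi J1 :: l) ++ [mkBox d k0 i hi (K m)] from rfl,
                List.getLast?_concat] at hx
              simp only [List.head?_cons, Option.mem_some_iff] at hx hy
              subst hx
              subst hy
              exact hstep
          · intro C hC
            rcases List.mem_append.1 hC with h | h
            · exact hin C h
            · rw [List.mem_singleton.1 h]
              exact inCl_intro hd hD0 hL hi (hKmem m)
      · have hKeq : K (m+1) = K m := by
          funext k
          have h1' : (k:ℕ) < m := lt_of_lt_of_le k.isLt (le_of_not_gt hmd)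
          have h2' : (k:ℕ) < m + 1 := by omega
          simp [hK, h1', h2']
        exact ⟨l, by rw [hKeq]; exact hc, hin⟩
  obtain ⟨l, hc, hin⟩ := main d
  rw [hKd] at hc
  exact ⟨l, hc, hin⟩

lemma star_core (hd : 1 ≤ d) (hD0 : 0 < D0) (hL : L = D0 * 2 ^ k0)
    {p : (Fin d → ℝ) × ℝ} {B1 B2 : Box d k0} (h1 : inCl d k0 D0 L p B1)
    (h2 : inCl d k0 D0 L p B2) (hlv : B1.level ≤ B2.level) :
    ∃ l : List (Box d k0),
      List.Chain' (fun A B => A = B ∨ (boxGraph d k0 D0 L).Adj A B) (B1 :: (l ++ [B2])) ∧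
      ∀ C ∈ l, inCl d k0 D0 L p C := by
  obtain ⟨J1, hJ1, hp1⟩ := inCl_elim hd hD0 hL h1
  obtain ⟨J2, hJ2, hp2⟩ := inCl_elim hd hD0 hL h2
  rcases eq_or_lt_of_le hlv with heq | hlt
  · rw [← heq] at hp2
    obtain ⟨l, hc, hin⟩ := chain_same_level hd hD0 hL B1.level_le J1 J2 hp1 hp2
    rw [hJ1] at hc
    have hJ2' : mkBox d k0 B1.level B1.level_le J2 = B2 := by
      rw [mkBox_congr heq B1.level_le B2.level_le J2, hJ2]
    rw [hJ2'] at hc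
    exact ⟨l, hc, hin⟩
  · have hik0 : B1.level < k0 := lt_of_lt_of_le hlt B2.level_le
    have hlv2 : B2.level = B1.level + 1 := by
      have hy1 : p.2 ≤ wLow d (B1.level + 1) := hp1.2.2 hik0
      have hy2 : wLow d B2.level ≤ p.2 := hp2.2.1
      by_contra hne
      have h3 : B1.level + 1 < B2.level := by omega
      exact absurd (le_trans hy2 hy1) (not_le.2 (wLow_lt_wLow hd h3))
    have hy : p.2 = wLow d (B1.level + 1) :=
      le_antisymm (hp1.2.2 hik0) (by rw [← hlv2]; exact hp2.2.1)
    have hpar : p ∈ clCube d k0 D0 (B1.level + 1) (fun k => (J1 k + 1) / 2) :=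
      mem_parent_cube hD0 hik0 hp1 hy hd
    have e1 : mkBox d k0 B1.level (le_of_lt hik0) J1 = B1 := by
      rw [mkBox_congr rfl (le_of_lt hik0) B1.level_le J1]
      exact hJ1
    have hadj : (boxGraph d k0 D0 L).Adj B1
        (mkBox d k0 (B1.level + 1) hik0 (fun k => (J1 k + 1) / 2)) := by
      have h := adj_parent hd hD0 hL hik0 J1
      rw [e1] at h
      exact h
    rw [hlv2] at hp2
    obtain ⟨l, hc, hin⟩ := chain_same_level hd hD0 hL hik0 (fun k => (J1 k + 1) / 2) J2 hpar hp2
    have e2 : mkBox d k0 (B1.level + 1) hik0 J2 = B2 := by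
      rw [mkBox_congr hlv2.symm hik0 B2.level_le J2]
      exact hJ2
    rw [e2] at hc
    refine ⟨mkBox d k0 (B1.level + 1) hik0 (fun k => (J1 k + 1) / 2) :: l, ?_, ?_⟩
    · exact List.isChain_cons_cons.2 ⟨Or.inr hadj, hc⟩
    · intro C hC
      rcases List.mem_cons.1 hC with rfl | hC
      · exact inCl_intro hd hD0 hL hik0 hpar
      · exact hin C hC

end Statement8
namespace Statement8

variable {d k0 : ℕ} {D0 L : ℝ}

lemma star (hd : 1 ≤ d) (hD0 : 0 < D0) (hL : L = D0 * 2 ^ k0) (B1 B2 : Box d k0)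
    (hm : meets L (boxSet d k0 D0 B1) (boxSet d k0 D0 B2)) :
    ∃ l : List (Box d k0),
      List.Chain' (fun A B => A = B ∨ (boxGraph d k0 D0 L).Adj A B) (B1 :: (l ++ [B2])) ∧
      ∀ C ∈ l, C = B1 ∨ (gPlusGraph d k0 D0 L).Adj B1 C := by
  obtain ⟨v, w, q, hq1, hq2⟩ := hm
  have h1 : inCl d k0 D0 L q B1 := ⟨v, hq1⟩
  have h2 : inCl d k0 D0 L q B2 := ⟨w, hq2⟩
  have key : ∀ C, inCl d k0 D0 L q C → C = B1 ∨ (gPlusGraph d k0 D0 L).Adj B1 C := by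
    intro C hC
    by_cases hCB : C = B1
    · exact Or.inl hCB
    · exact Or.inr (show _ ≠ _ ∧ meets L _ _ from ⟨Ne.symm hCB, meets_of_inCl h1 hC⟩)
  rcases le_total B1.level B2.level with h | h
  · obtain ⟨l, hc, hin⟩ := star_core hd hD0 hL h1 h2 h
    exact ⟨l, hc, fun C hC => key C (hin C hC)⟩
  · obtain ⟨l, hc, hin⟩ := star_core hd hD0 hL h2 h1 h
    refine ⟨l.reverse, ?_, fun C hC => key C (hin C (List.mem_reverse.1 hC))⟩
    have hsym : ∀ A B : Box d k0, (A = B ∨ (boxGraph d k0 D0 L).Adj A B) →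
        (flip (fun A B : Box d k0 => A = B ∨ (boxGraph d k0 D0 L).Adj A B)) A B := by
      intro A B hAB
      rcases hAB with rfl | hAB
      · exact Or.inl rfl
      · exact Or.inr hAB.symm
    have hrev := List.isChain_reverse.2 (hc.imp hsym)
    rw [show (B2 :: (l ++ [B1])).reverse = B1 :: (l.reverse ++ [B2]) by simp] at hrev
    exact hrev

lemma reach_of_chain {α : Type*} (G : SimpleGraph α) (Rset : Set α) :
    ∀ (l : List α) (a b : α),
      List.Chain' (fun x y => x = y ∨ G.Adj x y) (a :: (l ++ [b])) →
      (∀ c ∈ a :: (l ++ [b]), c ∈ Rset) → (onSet G Rset).Reachable a b := by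
  intro l
  induction l with
  | nil =>
    intro a b hc hm
    rcases List.isChain_pair.1 hc with rfl | hadj
    · exact SimpleGraph.Reachable.refl _
    · exact SimpleGraph.Adj.reachable ⟨hm a (by simp), hm b (by simp), hadj⟩
  | cons c l ih =>
    intro a b hc hm
    have hc' := List.isChain_cons_cons.1 hc
    have hr1 : (onSet G Rset).Reachable a c := by
      rcases hc'.1 with rfl | hadj
      · exact SimpleGraph.Reachable.refl _
      · exact SimpleGraph.Adj.reachable ⟨hm a (by simp), hm c (by simp), hadj⟩
    exact hr1.trans (ih c b hc'.2 (fun x hx => hm x (List.mem_cons_of_mem a hx)))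

lemma walk_ind (hd : 1 ≤ d) (hD0 : 0 < D0) (hL : L = D0 * 2 ^ k0)
    (Wst : Set (Box d k0)) (BH : Box d k0) :
    ∀ (BW B : Box d k0) (w : (gPlusGraph d k0 D0 L).Walk B BW),
      (BW ∈ Wst ∨ (∃ B' ∈ Wst, (gPlusGraph d k0 D0 L).Adj BW B')) →
      (onSet (boxGraph d k0 D0 L) Wstᶜ).Reachable BH B → B ∉ Wst →
      ∃ b ∈ w.support, b ∈ visBoundaryF (boxGraph d k0 D0 L) (gPlusGraph d k0 D0 L) Wst BH := by
  intro BW B w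
  induction w with
  | nil =>
    intro hBW hreach hB
    rcases hBW with hW | ⟨B', hB', hadj⟩
    · exact absurd hW hB
    · exact ⟨_, by simp, ⟨⟨B', hB', hadj⟩, hreach⟩⟩
  | @cons B C BW' hadj w' ih =>
    intro hBW hreach hB
    by_cases hC : C ∈ Wst
    · exact ⟨B, by simp, ⟨⟨C, hC, hadj⟩, hreach⟩⟩
    · obtain ⟨l, hchain, hel⟩ := star hd hD0 hL B C (show _ ≠ _ ∧ meets L _ _ from hadj).2
      by_cases hlW : ∃ Cm ∈ l, Cm ∈ Wst
      · obtain ⟨Cm, hCm, hCmW⟩ := hlW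
        rcases hel Cm hCm with rfl | hadjB
        · exact absurd hCmW hB
        · exact ⟨B, by simp, ⟨⟨Cm, hCmW, hadjB⟩, hreach⟩⟩
      · push_neg at hlW
        have hrBC : (onSet (boxGraph d k0 D0 L) Wstᶜ).Reachable B C := by
          apply reach_of_chain _ _ l B C hchain
          intro c hc
          rcases List.mem_cons.1 hc with rfl | hc
          · exact hB
          · rcases List.mem_append.1 hc with hc | hc
            · exact hlW c hc
            · rw [List.mem_singleton.1 hc]
              exact hC
        obtain ⟨b, hb1, hb2⟩ := ih hBW (hreach.trans hrBC) hC
        refine ⟨b, ?_, hb2⟩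
        rw [SimpleGraph.Walk.support_cons]
        exact List.mem_cons_of_mem _ hb1

end Statement8
/-- For `D0` sufficiently small (depending only on `d`), for every weighted
configuration and vertices `u, v` (contained in boxes `Bu, Bv`): if `BW` is a box in
`W(u,v) ∪ S(u,v)` and `BH` is a box of some hole `H` (that is, `BH ∉ W(u,v)`), then every
walk in `𝓖⁺` from `BH` to `BW` contains a box of the visible boundary of `H`. -/
theorem statement_8 (d : ℕ) (hd : 1 ≤ d) :
    ∃ D0star : ℝ, 0 < D0star ∧
      ∀ (n k0 : ℕ) (D0 : ℝ), 0 < D0 → D0 ≤ D0star →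
        (n : ℝ) ^ ((1 : ℝ) / d) = D0 * 2 ^ k0 →
        ∀ (V : Type) (_ : Fintype V) (pos : V → Fin d → ℝ) (wt : V → ℝ),
          (∀ u, 1 ≤ wt u) →
          (∀ u k, 0 ≤ pos u k ∧ pos u k < (n : ℝ) ^ ((1 : ℝ) / d)) →
          ∀ (u v : V) (Bu Bv : Box d k0),
            (pos u, wt u) ∈ boxSet d k0 D0 Bu →
            (pos v, wt v) ∈ boxSet d k0 D0 Bv →
            ∀ BW BH : Box d k0,
              BW ∈ boxW d k0 D0 ((n : ℝ) ^ ((1 : ℝ) / d)) pos wt Bu Bv ∪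
                    boxS d k0 D0 ((n : ℝ) ^ ((1 : ℝ) / d)) pos wt Bu Bv →
              BH ∉ boxW d k0 D0 ((n : ℝ) ^ ((1 : ℝ) / d)) pos wt Bu Bv →
              ∀ w : (gPlusGraph d k0 D0 ((n : ℝ) ^ ((1 : ℝ) / d))).Walk BH BW,
                ∃ b ∈ w.support,
                  b ∈ boxVisBoundary d k0 D0 ((n : ℝ) ^ ((1 : ℝ) / d))
                        (boxW d k0 D0 ((n : ℝ) ^ ((1 : ℝ) / d)) pos wt Bu Bv) BH := by
  refine ⟨1, one_pos, ?_⟩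
  intro n k0 D0 hD0 _ hLn V _ pos wt _ _ u v Bu Bv _ _ BW BH hBW hBH w
  apply Statement8.walk_ind hd hD0 hLn _ BH BW BH w ?_ (SimpleGraph.Reachable.refl _) hBH
  rcases hBW with h | h
  · exact Or.inl h
  · exact Or.inr h.2
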